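/- Promises are kept along generic sequences: assume Dom and each set A k s are measurable. Let p be a condition and let g : ℕ → ℕ agree with f^p on {0,…,n^p−1}. Suppose that for every m > n^p there is a condition q extending p such that n^q ≥ m and f^q k = g k for all k < n^q. Then μ(Dom \ ⋂_{k ≥ n^p} A k (g k)) ≤ ε^p. -/

import Mathlib

open MeasureTheory

/-- A forcing condition: a finite string of naturals together with a positive
rational promise. -/
structure Cond where
  f : List ℕ
  ε : ℚ
  pos : 0 < ε

/-- `Dseg A g n m` is the set `D_{[n,m)}[g] = ⋂_{k ∈ [n,m)} A k (g k)`. -/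
def Dseg (A : ℕ → ℕ → Set (ℕ → Bool)) (g : List ℕ) (n m : ℕ) : Set (ℕ → Bool) :=
  ⋂ k ∈ Set.Ico n m, A k (g.getD k 0)

/-- The condition `q = (g, δ)` extends the condition `p = (f, ε)`: `f` is an initial
segment of `g`, `δ ≤ ε`, and if `f ≠ g` then `μ(Dom \ D_{[|f|,|g|)}[g]) + δ < ε`. -/
def Extends (μ : Measure (ℕ → Bool)) (Dom : Set (ℕ → Bool))
    (A : ℕ → ℕ → Set (ℕ → Bool)) (q p : Cond) : Prop :=
  p.f <+: q.f ∧ q.ε ≤ p.ε ∧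
    (p.f ≠ q.f →
      μ (Dom \ Dseg A q.f p.f.length q.f.length) + ENNReal.ofReal (q.ε : ℝ) <
        ENNReal.ofReal (p.ε : ℝ))

/-- Promises are kept along generic sequences: if `g` agrees with `f^p` below `n^p`
and arbitrarily long extensions of `p` along `g` exist, then the `ε^p`-promise holds
for `g` from `n^p` onwards. -/
theorem promises_are_kept
    (μ : Measure (ℕ → Bool)) (Dom : Set (ℕ → Bool)) (A : ℕ → ℕ → Set (ℕ → Bool))
    (hDom : MeasurableSet Dom) (hmeas : ∀ k s, MeasurableSet (A k s))
    (p : Cond) (g : ℕ → ℕ)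
    (hg : ∀ k < p.f.length, g k = p.f.getD k 0)
    (H : ∀ m > p.f.length, ∃ q : Cond, Extends μ Dom A q p ∧ m ≤ q.f.length ∧
      ∀ k < q.f.length, q.f.getD k 0 = g k) :
    μ (Dom \ ⋂ (k : ℕ) (_ : p.f.length ≤ k), A k (g k)) ≤ ENNReal.ofReal (p.ε : ℝ) := by
  set n := p.f.length with hn
  set s : ℕ → Set (ℕ → Bool) := fun m => Dom \ ⋂ k ∈ Set.Ico n m, A k (g k) with hs
  have hsub : (Dom \ ⋂ (k : ℕ) (_ : n ≤ k), A k (g k)) ⊆ ⋃ m, s m := by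
    intro x hx
    obtain ⟨hxD, hxI⟩ := hx
    simp only [Set.mem_iInter, not_forall] at hxI
    obtain ⟨k, hk, hknot⟩ := hxI
    refine Set.mem_iUnion.2 ⟨k + 1, hxD, fun hxm => ?_⟩
    exact hknot (Set.mem_iInter₂.1 hxm k ⟨hk, Nat.lt_succ_self k⟩)
  refine le_trans (measure_mono hsub) ?_
  have hmono : Monotone s := by
    intro a b hab
    apply Set.diff_subset_diff_right
    intro x hx
    exact Set.mem_iInter₂.2 fun k hk =>
      Set.mem_iInter₂.1 hx k ⟨hk.1, lt_of_lt_of_le hk.2 hab⟩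
  rw [hmono.directed_le.measure_iUnion]
  refine iSup_le fun m => ?_
  by_cases hm : n < m
  · obtain ⟨q, ⟨hpre, hδ, hlt⟩, hmlen, hq⟩ := H m hm
    have hne : p.f ≠ q.f := by
      intro h
      have : q.f.length = n := by rw [← h]
      omega
    have hlt' := hlt hne
    have hsub2 : s m ⊆ Dom \ Dseg A q.f n q.f.length := by
      apply Set.diff_subset_diff_right
      intro x hx
      refine Set.mem_iInter₂.2 fun k hk => ?_
      have hkq : k < q.f.length := lt_of_lt_of_le hk.2 hmlen
      have := Set.mem_iInter₂.1 hx k ⟨hk.1, hkq⟩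
      rwa [hq k hkq] at this
    calc μ (s m) ≤ μ (Dom \ Dseg A q.f n q.f.length) := measure_mono hsub2
      _ ≤ μ (Dom \ Dseg A q.f n q.f.length) + ENNReal.ofReal (q.ε : ℝ) := le_self_add
      _ ≤ ENNReal.ofReal (p.ε : ℝ) := le_of_lt hlt'
  · have he : s m = ∅ := by
      simp only [hs]
      rw [Set.Ico_eq_empty hm]
      simp
    rw [he]
    simp
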